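/- arXiv:2309.16040 — 5 statements merged into one kernel-verified Lean document; each statement's English description precedes it below -/
import Mathlib

section
/- Let R ∈ SO(3), t, n ∈ ℝ³, and l₁, l₂, l₁', l₂' ∈ ℝ³. Suppose there exist nonzero real numbers λ₁, λ₂ such that lᵢ = λᵢ · (Rᵀ − n tᵀ) lᵢ' for i = 1, 2 (i.e., the two line correspondences satisfy the common calibrated homography constraint with plane normal n). Then the pair of line junctions satisfies the calibrated epipolar constraint: ⟨l₁' × l₂', t × (R (l₁ × l₂))⟩ = 0. -/
open Matrix

/-- Cross product of images under a 3×3 matrix, via the adjugate. -/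
lemma cross_mulVec_adj (M : Matrix (Fin 3) (Fin 3) ℝ) (a b : Fin 3 → ℝ) :
    (M *ᵥ a) ⨯₃ (M *ᵥ b) = (M.adjugate)ᵀ *ᵥ (a ⨯₃ b) := by
  ext i
  fin_cases i <;>
    simp [cross_apply, adjugate_fin_three, mulVec, dotProduct, Fin.sum_univ_three] <;> ring

lemma mul_vecMulVec' (A : Matrix (Fin 3) (Fin 3) ℝ) (x y : Fin 3 → ℝ) :
    A * vecMulVec x y = vecMulVec (A *ᵥ x) y := by
  ext i j
  simp [mul_apply, vecMulVec, mulVec, dotProduct, Fin.sum_univ_three]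
  ring

lemma vecMulVec_transpose' (x y : Fin 3 → ℝ) :
    (vecMulVec x y)ᵀ = vecMulVec y x := by
  ext i j
  simp [vecMulVec, mul_comm]

/-- The core algebraic identity: for a rank-one perturbation of the identity,
the epipolar expression vanishes. -/
lemma key_identity (w t m : Fin 3 → ℝ) :
    w ⬝ᵥ (t ⨯₃ ((adjugate ((1 : Matrix (Fin 3) (Fin 3) ℝ) - vecMulVec t m)) *ᵥ w)) = 0 := by
  simp [cross_apply, adjugate_fin_three, dotProduct, mulVec, vecMulVec,
    Matrix.one_apply, Fin.sum_univ_three]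
  ring

/-- **Coplanarity implies junction constraint.**
If two line correspondences `(l₁, l₁')`, `(l₂, l₂')` satisfy the common calibrated
homography constraint `lᵢ = λᵢ • (Rᵀ − n tᵀ) lᵢ'` for a rotation `R ∈ SO(3)`,
translation `t` and plane normal `n`, then the pair of line junctions satisfies the
calibrated epipolar constraint `⟨l₁' × l₂', t × (R (l₁ × l₂))⟩ = 0`. -/
theorem coplanarity_implies_junction_epipolar
    (R : Matrix (Fin 3) (Fin 3) ℝ) (hRorth : Rᵀ * R = 1) (hRdet : R.det = 1)
    (t n l₁ l₂ l₁' l₂' : Fin 3 → ℝ)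
    (h : ∃ lam₁ lam₂ : ℝ, lam₁ ≠ 0 ∧ lam₂ ≠ 0 ∧
      l₁ = lam₁ • ((Rᵀ - vecMulVec n t) *ᵥ l₁') ∧
      l₂ = lam₂ • ((Rᵀ - vecMulVec n t) *ᵥ l₂')) :
    (l₁' ⨯₃ l₂') ⬝ᵥ (t ⨯₃ (R *ᵥ (l₁ ⨯₃ l₂))) = 0 := by
  obtain ⟨lam₁, lam₂, h1, h2, e1, e2⟩ := h
  have hRR : R * Rᵀ = 1 := mul_eq_one_comm.mp hRorth
  have hadjR : adjugate R = Rᵀ := by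
    have h3 := Matrix.mul_adjugate R
    rw [hRdet, one_smul] at h3
    calc adjugate R = (Rᵀ * R) * adjugate R := by rw [hRorth, one_mul]
    _ = Rᵀ * (R * adjugate R) := by rw [mul_assoc]
    _ = Rᵀ := by rw [h3, mul_one]
  set m : Fin 3 → ℝ := R *ᵥ n with hm
  have hMfac : Rᵀ - vecMulVec n t = Rᵀ * (1 - vecMulVec m t) := by
    rw [mul_sub, mul_one, mul_vecMulVec', hm, mulVec_mulVec, hRorth, one_mulVec]
  have hadjM : R * (adjugate (Rᵀ - vecMulVec n t))ᵀ
      = adjugate ((1 : Matrix (Fin 3) (Fin 3) ℝ) - vecMulVec t m) := by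
    rw [hMfac, adjugate_mul_distrib, transpose_mul, ← adjugate_transpose, hadjR,
      transpose_transpose, ← mul_assoc, hRR, one_mul, adjugate_transpose]
    rw [transpose_sub, transpose_one, vecMulVec_transpose']
  have hcross : l₁ ⨯₃ l₂ = (lam₁ * lam₂) •
      (((Rᵀ - vecMulVec n t) *ᵥ l₁') ⨯₃ ((Rᵀ - vecMulVec n t) *ᵥ l₂')) := by
    rw [e1, e2]
    simp only [LinearMap.map_smul, LinearMap.smul_apply, smul_smul]
  rw [hcross, cross_mulVec_adj]
  rw [Matrix.mulVec_smul, LinearMap.map_smul, dotProduct_smul, mulVec_mulVec, hadjM,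
    key_identity, smul_zero]
end

section
/- Let R ∈ SO(3), t ∈ ℝ³, and l₁, l₂, l₁', l₂' ∈ ℝ³. Set dᵢ = lᵢ × (Rᵀ lᵢ') for i = 1, 2 and m = d₁ × d₂. Assume: (i) there exists X ∈ ℝ³ with ⟨lᵢ, X⟩ = 0 and ⟨lᵢ', R X + t⟩ = 0 for i = 1, 2 (the backprojected planes of all four image lines share the point X); (ii) d₁ and d₂ are linearly independent; (iii) ⟨m, X⟩ ≠ 0; and (iv) ⟨m, X + Rᵀ t⟩ ≠ 0 (the plane through X spanned by d₁, d₂ passes through neither camera center). Then there exist n ∈ ℝ³ and nonzero real numbers λ₁, λ₂ such that (Rᵀ − n tᵀ) lᵢ' = λᵢ · lᵢ for i = 1, 2, i.e., the two line correspondences satisfy a common calibrated homography constraint. -/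
open Matrix

lemma cross_cross_eq (a b c : Fin 3 → ℝ) :
    (a ⨯₃ b) ⨯₃ c = (a ⬝ᵥ c) • b - (b ⬝ᵥ c) • a := by
  funext k
  fin_cases k <;>
    simp [crossProduct, dotProduct, Fin.sum_univ_three] <;> ring

lemma cross_zero_imp (w v : Fin 3 → ℝ) (hw : w ≠ 0) (h : w ⨯₃ v = 0) :
    ∃ c : ℝ, v = c • w := by
  have h0 := congrFun h 0
  have h1 := congrFun h 1
  have h2 := congrFun h 2
  simp [crossProduct] at h0 h1 h2
  have hw' : w 0 ≠ 0 ∨ w 1 ≠ 0 ∨ w 2 ≠ 0 := by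
    by_contra hc
    push_neg at hc
    apply hw; funext k; fin_cases k <;> simp [hc.1, hc.2.1, hc.2.2]
  rcases hw' with h' | h' | h'
  · refine ⟨v 0 / w 0, ?_⟩
    funext k; fin_cases k
    · show v 0 = v 0 / w 0 * w 0; field_simp
    · show v 1 = v 0 / w 0 * w 1; field_simp; linear_combination h2
    · show v 2 = v 0 / w 0 * w 2; field_simp; linear_combination -h1
  · refine ⟨v 1 / w 1, ?_⟩
    funext k; fin_cases k
    · show v 0 = v 1 / w 1 * w 0; field_simp; linear_combination -h2
    · show v 1 = v 1 / w 1 * w 1; field_simp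
    · show v 2 = v 1 / w 1 * w 2; field_simp; linear_combination h0
  · refine ⟨v 2 / w 2, ?_⟩
    funext k; fin_cases k
    · show v 0 = v 2 / w 2 * w 0; field_simp; linear_combination h1
    · show v 1 = v 2 / w 2 * w 1; field_simp; linear_combination -h0
    · show v 2 = v 2 / w 2 * w 2; field_simp

lemma vecMulVec_mulVec' (n t x : Fin 3 → ℝ) :
    vecMulVec n t *ᵥ x = (t ⬝ᵥ x) • n := by
  funext i
  simp [vecMulVec_apply, mulVec, dotProduct, Finset.sum_mul, Finset.mul_sum]
  ring_nf

lemma transpose_mulVec_dot (R : Matrix (Fin 3) (Fin 3) ℝ) (u v : Fin 3 → ℝ) :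
    (Rᵀ *ᵥ u) ⬝ᵥ v = u ⬝ᵥ (R *ᵥ v) := by
  rw [mulVec_transpose, ← dotProduct_mulVec]

lemma cross_zero_right (a : Fin 3 → ℝ) : a ⨯₃ (0 : Fin 3 → ℝ) = 0 := by
  funext k; fin_cases k <;> simp [crossProduct]

lemma cross_zero_left (a : Fin 3 → ℝ) : (0 : Fin 3 → ℝ) ⨯₃ a = 0 := by
  funext k; fin_cases k <;> simp [crossProduct]

/-- **Junction constraint implies coplanarity.**
Let `R ∈ SO(3)`, `t ∈ ℝ³`, and let `(l₁, l₁')`, `(l₂, l₂')` be line correspondences.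
Set `dᵢ = lᵢ × (Rᵀ lᵢ')` and `m = d₁ × d₂`. Assume the backprojected planes of all
four image lines share a common point `X`, that `d₁, d₂` are linearly independent,
and that `⟨m, X⟩ ≠ 0` and `⟨m, X + Rᵀ t⟩ ≠ 0` (the plane through `X` spanned by
`d₁, d₂` passes through neither camera center). Then the two line correspondences
satisfy a common calibrated homography constraint `(Rᵀ − n tᵀ) lᵢ' = λᵢ • lᵢ`
with nonzero scalars `λ₁, λ₂`. -/
theorem junction_implies_coplanarity
    (R : Matrix (Fin 3) (Fin 3) ℝ) (hRorth : Rᵀ * R = 1) (hRdet : R.det = 1)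
    (t l₁ l₂ l₁' l₂' d₁ d₂ m : Fin 3 → ℝ)
    (hd₁ : d₁ = l₁ ⨯₃ (Rᵀ *ᵥ l₁')) (hd₂ : d₂ = l₂ ⨯₃ (Rᵀ *ᵥ l₂'))
    (hm : m = d₁ ⨯₃ d₂)
    (hind : LinearIndependent ℝ ![d₁, d₂])
    (hX : ∃ X : Fin 3 → ℝ,
      (l₁ ⬝ᵥ X = 0 ∧ l₁' ⬝ᵥ (R *ᵥ X + t) = 0) ∧
      (l₂ ⬝ᵥ X = 0 ∧ l₂' ⬝ᵥ (R *ᵥ X + t) = 0) ∧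
      m ⬝ᵥ X ≠ 0 ∧ m ⬝ᵥ (X + Rᵀ *ᵥ t) ≠ 0) :
    ∃ (n : Fin 3 → ℝ) (lam₁ lam₂ : ℝ), lam₁ ≠ 0 ∧ lam₂ ≠ 0 ∧
      (Rᵀ - vecMulVec n t) *ᵥ l₁' = lam₁ • l₁ ∧
      (Rᵀ - vecMulVec n t) *ᵥ l₂' = lam₂ • l₂ := by
  obtain ⟨X, ⟨hl₁X, hl₁'⟩, ⟨hl₂X, hl₂'⟩, hmX, hmXt⟩ := hX
  have hRRt : R * Rᵀ = 1 := mul_eq_one_comm.mp hRorth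
  set s₁ : Fin 3 → ℝ := Rᵀ *ᵥ l₁' with hs₁
  set s₂ : Fin 3 → ℝ := Rᵀ *ᵥ l₂' with hs₂
  -- plane constraints in camera-1 coordinates
  have key : ∀ (l' : Fin 3 → ℝ), l' ⬝ᵥ (R *ᵥ X + t) = (Rᵀ *ᵥ l') ⬝ᵥ (X + Rᵀ *ᵥ t) := by
    intro l'
    rw [dotProduct_add, dotProduct_add, transpose_mulVec_dot, transpose_mulVec_dot,
      mulVec_mulVec, hRRt, one_mulVec]
  have hs₁Xt : s₁ ⬝ᵥ (X + Rᵀ *ᵥ t) = 0 := by rw [hs₁, ← key]; exact hl₁'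
  have hs₂Xt : s₂ ⬝ᵥ (X + Rᵀ *ᵥ t) = 0 := by rw [hs₂, ← key]; exact hl₂'
  have ht₁ : t ⬝ᵥ l₁' = -(s₁ ⬝ᵥ X) := by
    have := hs₁Xt
    rw [dotProduct_add] at this
    have h2 : s₁ ⬝ᵥ (Rᵀ *ᵥ t) = t ⬝ᵥ l₁' := by
      rw [hs₁, transpose_mulVec_dot, mulVec_mulVec, hRRt, one_mulVec, dotProduct_comm]
    linarith [this, h2]
  have ht₂ : t ⬝ᵥ l₂' = -(s₂ ⬝ᵥ X) := by
    have := hs₂Xt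
    rw [dotProduct_add] at this
    have h2 : s₂ ⬝ᵥ (Rᵀ *ᵥ t) = t ⬝ᵥ l₂' := by
      rw [hs₂, transpose_mulVec_dot, mulVec_mulVec, hRRt, one_mulVec, dotProduct_comm]
    linarith [this, h2]
  set μ : ℝ := m ⬝ᵥ X with hμ
  -- nonzero facts
  have hd₁0 : d₁ ≠ 0 := by
    have := hind.ne_zero 0; simpa using this
  have hd₂0 : d₂ ≠ 0 := by
    have := hind.ne_zero 1; simpa using this
  have hdm₁ : d₁ ⬝ᵥ m = 0 := by rw [hm]; exact dot_self_cross d₁ d₂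
  have hdm₂ : d₂ ⬝ᵥ m = 0 := by rw [hm]; exact dot_cross_self d₁ d₂
  have hds₁ : d₁ ⬝ᵥ s₁ = 0 := by
    rw [hd₁, dotProduct_comm]; exact dot_cross_self l₁ s₁
  have hds₂ : d₂ ⬝ᵥ s₂ = 0 := by
    rw [hd₂, dotProduct_comm]; exact dot_cross_self l₂ s₂
  have hdl₁ : d₁ ⬝ᵥ l₁ = 0 := by
    rw [hd₁, dotProduct_comm]; exact dot_self_cross l₁ s₁
  have hdl₂ : d₂ ⬝ᵥ l₂ = 0 := by
    rw [hd₂, dotProduct_comm]; exact dot_self_cross l₂ s₂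
  -- the auxiliary directions w i = d i ⨯₃ X are nonzero
  have hw : ∀ d : Fin 3 → ℝ, d ≠ 0 → d ⬝ᵥ m = 0 → d ⨯₃ X ≠ 0 := by
    intro d hd0 hdm hcon
    obtain ⟨c, hc⟩ := cross_zero_imp d X hd0 hcon
    apply hmX
    rw [hμ] at *
    rw [hc, dotProduct_smul, dotProduct_comm, hdm, smul_zero]
  have hw₁ : d₁ ⨯₃ X ≠ 0 := hw d₁ hd₁0 hdm₁
  have hw₂ : d₂ ⨯₃ X ≠ 0 := hw d₂ hd₂0 hdm₂
  -- main per-index argument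
  have harg : ∀ (l s d : Fin 3 → ℝ), d = l ⨯₃ s → d ≠ 0 → d ⬝ᵥ m = 0 →
      d ⬝ᵥ s = 0 → d ⬝ᵥ l = 0 → l ⬝ᵥ X = 0 → s ⬝ᵥ (X + Rᵀ *ᵥ t) = 0 →
      d ⨯₃ X ≠ 0 →
      ∃ lam : ℝ, lam ≠ 0 ∧ s + (s ⬝ᵥ X) • ((-μ⁻¹) • m) = lam • l := by
    intro l s d hd hd0 hdm hds hdl hlX hsXt hwne
    set σ : ℝ := s ⬝ᵥ X with hσ
    set u : Fin 3 → ℝ := μ • s - σ • m with hu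
    set w : Fin 3 → ℝ := d ⨯₃ X with hwdef
    -- u is orthogonal to d and to X, hence parallel to w
    have hdu : d ⬝ᵥ u = 0 := by
      rw [hu, dotProduct_sub, dotProduct_smul, dotProduct_smul, hds, hdm]
      simp
    have hXu : X ⬝ᵥ u = 0 := by
      rw [hu, dotProduct_sub, dotProduct_smul, dotProduct_smul, hμ, hσ,
        dotProduct_comm X s, dotProduct_comm X m]
      ring_nf
    have hcu : w ⨯₃ u = 0 := by
      rw [hwdef, cross_cross_eq, hdu, hXu]; simp
    have hXl : X ⬝ᵥ l = 0 := by rw [dotProduct_comm]; exact hlX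
    have hcl : w ⨯₃ l = 0 := by
      rw [hwdef, cross_cross_eq, hdl, hXl]; simp
    obtain ⟨a, ha⟩ := cross_zero_imp w u hwne hcu
    obtain ⟨b, hb⟩ := cross_zero_imp w l hwne hcl
    -- l ≠ 0 hence b ≠ 0
    have hl0 : l ≠ 0 := by
      intro h
      apply hd0
      rw [hd, h, cross_zero_left]
    have hb0 : b ≠ 0 := by
      intro h; apply hl0; rw [hb, h, zero_smul]
    -- u ≠ 0 hence a ≠ 0
    have hsX0 : u ≠ 0 := by
      intro h
      have h' : μ • s = σ • m := by
        have := sub_eq_zero.mp (hu ▸ h)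
        exact this
      have hdot := congrArg (fun v => v ⬝ᵥ (X + Rᵀ *ᵥ t)) h'
      simp only [smul_dotProduct, hsXt, smul_eq_mul, mul_zero] at hdot
      have hσ0 : σ = 0 := by
        rcases mul_eq_zero.mp hdot.symm with h1 | h1
        · exact h1
        · exact absurd h1 hmXt
      have hs0 : s = 0 := by
        have : μ • s = 0 := by rw [h', hσ0, zero_smul]
        exact (smul_eq_zero.mp this).resolve_left hmX
      apply hd0
      rw [hd, hs0, cross_zero_right]
    have ha0 : a ≠ 0 := by
      intro h; apply hsX0; rw [ha, h, zero_smul]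
    refine ⟨a / (b * μ), ?_, ?_⟩
    · exact div_ne_zero ha0 (mul_ne_zero hb0 hmX)
    · -- s + σ • ((-μ⁻¹) • m) = (a/(bμ)) • l
      have hs_eq : s = μ⁻¹ • (a • w + σ • m) := by
        rw [← ha, hu]
        rw [sub_add_cancel, smul_smul, inv_mul_cancel₀ hmX, one_smul]
      rw [hs_eq, hb]
      match_scalars <;> field_simp <;> ring
  obtain ⟨lam₁, hlam₁, heq₁⟩ :=
    harg l₁ s₁ d₁ hd₁ hd₁0 hdm₁ hds₁ hdl₁ hl₁X hs₁Xt hw₁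
  obtain ⟨lam₂, hlam₂, heq₂⟩ :=
    harg l₂ s₂ d₂ hd₂ hd₂0 hdm₂ hds₂ hdl₂ hl₂X hs₂Xt hw₂
  refine ⟨(-μ⁻¹) • m, lam₁, lam₂, hlam₁, hlam₂, ?_, ?_⟩
  · rw [sub_mulVec, vecMulVec_mulVec', ht₁, ← heq₁, ← hs₁]
    module
  · rw [sub_mulVec, vecMulVec_mulVec', ht₂, ← heq₂, ← hs₂]
    module
end

section
/- Let R ∈ SO(3), t ∈ ℝ³, and let p, p' ∈ ℝ³ satisfy the calibrated epipolar constraint ⟨p', t × (R p)⟩ = 0. If the vectors R p and p' are linearly independent, then there exist real numbers s, s' such that s' · p' = s · (R p) + t; i.e., the 3D point X = s · p projects (in homogeneous coordinates) to p in camera 1 and to a nonzero multiple of p' in camera 2, so the correspondence (p, p') can be triangulated to a common 3D point. -/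
open Matrix

/-- **Epipolar constraint allows triangulation.**
Let `R ∈ SO(3)`, `t ∈ ℝ³`, and let `(p, p')` satisfy the calibrated epipolar constraint
`⟨p', t × (R p)⟩ = 0`. If `R p` and `p'` are linearly independent, then there exist
scalars `s, s'` with `s' • p' = s • (R p) + t`, i.e. the 3D point `X = s • p` projects
to `p` in camera 1 and to a multiple of `p'` in camera 2. -/
theorem epipolar_triangulation
    (R : Matrix (Fin 3) (Fin 3) ℝ) (hRorth : Rᵀ * R = 1) (hRdet : R.det = 1)
    (t p p' : Fin 3 → ℝ)
    (hE : p' ⬝ᵥ (t ⨯₃ (R *ᵥ p)) = 0)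
    (hind : LinearIndependent ℝ ![R *ᵥ p, p']) :
    ∃ s s' : ℝ, s' • p' = s • (R *ᵥ p) + t := by
  set v := R *ᵥ p with hv
  have hdet : Matrix.det ![t, v, p'] = 0 := by
    rw [triple_product_eq_det] at hE
    rw [show (0:ℝ) = Matrix.det ![p', t, v] from hE.symm]
    simp [Matrix.det_fin_three]
    erw [Matrix.det_fin_three, Matrix.det_fin_three]
    simp only [Matrix.cons_val_zero, Matrix.cons_val_one, Matrix.cons_val_two, Matrix.head_cons, Matrix.tail_cons]
    ring
  have hmem : t ∈ Submodule.span ℝ ({v, p'} : Set (Fin 3 → ℝ)) := by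
    by_contra hmem
    have hli : LinearIndependent ℝ ![t, v, p'] := by
      rw [show (![t, v, p'] : Fin 3 → Fin 3 → ℝ) = Fin.cons t ![v, p'] from rfl,
        linearIndependent_fin_cons]
      refine ⟨hind, ?_⟩
      intro h
      apply hmem
      have : Set.range ![v, p'] = ({v, p'} : Set (Fin 3 → ℝ)) := by
        ext x; simp [Fin.exists_fin_two, or_comm]
      rwa [this] at h
    have : IsUnit (Matrix.of ![t, v, p']) := by
      rw [← Matrix.linearIndependent_rows_iff_isUnit]
      exact hli
    have := this.ne_zero
    exact (Matrix.isUnit_iff_isUnit_det _ |>.mp ‹IsUnit (Matrix.of ![t, v, p'])›).ne_zero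
      (by exact hdet)
  obtain ⟨a, b, hab⟩ := Submodule.mem_span_pair.mp hmem
  exact ⟨-a, b, by rw [← hab]; module⟩
end

section
/- Let x, x' ∈ ℝ³ be unit vectors, let e₂ = (0, 1, 0), and let Q, Q' ∈ SO(3) satisfy Q x = e₂ and Q' x' = e₂. For φ ∈ ℝ let R_y(φ) denote the rotation about the y-axis, the matrix with rows (cos φ, 0, −sin φ), (0, 1, 0), (sin φ, 0, cos φ). Then for every R ∈ SO(3): R x = x' if and only if there exists φ ∈ ℝ with R = Q'ᵀ R_y(φ) Q. Hence the rotations consistent with one vanishing point correspondence (x, x') are exactly those of the decomposed form Q'ᵀ R_y(φ) Q. -/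
open Matrix

/-- Rotation about the y-axis by angle `φ`. -/
noncomputable def rotY (φ : ℝ) : Matrix (Fin 3) (Fin 3) ℝ :=
  !![Real.cos φ, 0, -Real.sin φ; 0, 1, 0; Real.sin φ, 0, Real.cos φ]

lemma exists_cos_sin {a c : ℝ} (h : a ^ 2 + c ^ 2 = 1) :
    ∃ φ : ℝ, Real.cos φ = a ∧ Real.sin φ = c := by
  have habs : ‖(⟨a, c⟩ : ℂ)‖ = 1 := by
    rw [Complex.norm_def, Complex.normSq_mk]
    rw [show a * a + c * c = 1 by nlinarith]
    exact Real.sqrt_one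
  have hz : (⟨a, c⟩ : ℂ) ≠ 0 := by
    intro h0
    rw [h0] at habs; simp at habs
  refine ⟨Complex.arg ⟨a, c⟩, ?_, ?_⟩
  · rw [Complex.cos_arg hz, habs]; simp
  · rw [Complex.sin_arg, habs]; simp

lemma fixes_e2 (S : Matrix (Fin 3) (Fin 3) ℝ) (hS : Sᵀ * S = 1) (hd : S.det = 1)
    (he : S *ᵥ ![0, 1, 0] = ![0, 1, 0]) : ∃ φ : ℝ, S = rotY φ := by
  have hS' : S * Sᵀ = 1 := mul_eq_one_comm.mp hS
  have col : ∀ i, S i 1 = ![0, 1, 0] i := by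
    intro i
    have := congrFun he i
    simpa [mulVec, dotProduct, Fin.sum_univ_three] using this
  have h01 : S 0 1 = 0 := by simpa using col 0
  have h11 : S 1 1 = 1 := by simpa using col 1
  have h21 : S 2 1 = 0 := by simpa using col 2
  have row11 := congrFun (congrFun hS' 1) 1
  simp [Matrix.mul_apply, Fin.sum_univ_three, Matrix.one_apply, h11] at row11
  have h10 : S 1 0 = 0 := by nlinarith [sq_nonneg (S 1 0), sq_nonneg (S 1 2)]
  have h12 : S 1 2 = 0 := by nlinarith [sq_nonneg (S 1 0), sq_nonneg (S 1 2)]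
  have col00 := congrFun (congrFun hS 0) 0
  simp [Matrix.mul_apply, Fin.sum_univ_three, Matrix.one_apply, h10] at col00
  have col02 := congrFun (congrFun hS 0) 2
  simp [Matrix.mul_apply, Fin.sum_univ_three, Matrix.one_apply, h10, h12] at col02
  have hdet : S.det = S 0 0 * S 2 2 - S 0 2 * S 2 0 := by
    rw [Matrix.det_fin_three, h01, h11, h21, h10, h12]; ring
  rw [hd] at hdet
  obtain ⟨φ, hc, hs⟩ := exists_cos_sin (a := S 0 0) (c := S 2 0)
    (by nlinarith)
  refine ⟨φ, ?_⟩
  have h22 : S 2 2 = S 0 0 := by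
    linear_combination (-(S 2 2)) * col00 + S 2 0 * col02 - S 0 0 * hdet
  have h02 : S 0 2 = -(S 2 0) := by
    linear_combination (-(S 0 2)) * col00 + S 0 0 * col02 + S 2 0 * hdet
  funext i j
  fin_cases i <;> fin_cases j <;>
    simp [rotY, hc, hs, h01, h11, h21, h10, h12, h22, h02]

/-- **Decomposition of rotations consistent with one VP correspondence.**
Let `x, x'` be unit vectors, `e₂ = (0,1,0)`, and let `Q, Q' ∈ SO(3)` satisfy
`Q x = e₂`, `Q' x' = e₂`. Then a rotation `R ∈ SO(3)` satisfies `R x = x'` if and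
only if `R = Q'ᵀ R_y(φ) Q` for some angle `φ`. -/
theorem rotation_decomposition_one_vp
    (x x' : Fin 3 → ℝ) (hx : x ⬝ᵥ x = 1) (hx' : x' ⬝ᵥ x' = 1)
    (Q Q' : Matrix (Fin 3) (Fin 3) ℝ)
    (hQorth : Qᵀ * Q = 1) (hQdet : Q.det = 1)
    (hQ'orth : Q'ᵀ * Q' = 1) (hQ'det : Q'.det = 1)
    (hQx : Q *ᵥ x = ![0, 1, 0]) (hQ'x' : Q' *ᵥ x' = ![0, 1, 0])
    (R : Matrix (Fin 3) (Fin 3) ℝ) (hRorth : Rᵀ * R = 1) (hRdet : R.det = 1) :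
    R *ᵥ x = x' ↔ ∃ φ : ℝ, R = Q'ᵀ * rotY φ * Q := by
  have hQQt : Q * Qᵀ = 1 := mul_eq_one_comm.mp hQorth
  have hQ'Q't : Q' * Q'ᵀ = 1 := mul_eq_one_comm.mp hQ'orth
  constructor
  · intro hRx
    set S := Q' * R * Qᵀ with hSdef
    have hSorth : Sᵀ * S = 1 := by
      simp only [hSdef, Matrix.transpose_mul, Matrix.transpose_transpose]
      calc Q * (Rᵀ * Q'ᵀ) * (Q' * R * Qᵀ)
          = Q * (Rᵀ * (Q'ᵀ * Q') * R) * Qᵀ := by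
            simp [Matrix.mul_assoc]
        _ = 1 := by rw [hQ'orth, Matrix.mul_one, hRorth, Matrix.mul_one, hQQt]
    have hSdet : S.det = 1 := by
      have : Qᵀ.det = 1 := by rw [Matrix.det_transpose, hQdet]
      simp [hSdef, Matrix.det_mul, hQ'det, hRdet, this]
    have hSe : S *ᵥ ![0, 1, 0] = ![0, 1, 0] := by
      have h1 : Qᵀ *ᵥ ![0, 1, 0] = x := by
        rw [← hQx, Matrix.mulVec_mulVec, hQorth, Matrix.one_mulVec]
      rw [hSdef, ← Matrix.mulVec_mulVec, ← Matrix.mulVec_mulVec, h1, hRx, hQ'x']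
    obtain ⟨φ, hφ⟩ := fixes_e2 S hSorth hSdet hSe
    refine ⟨φ, ?_⟩
    rw [← hφ, hSdef]
    symm
    calc Q'ᵀ * (Q' * R * Qᵀ) * Q = (Q'ᵀ * Q') * R * (Qᵀ * Q) := by
          simp [Matrix.mul_assoc]
      _ = R := by rw [hQ'orth, hQorth, Matrix.one_mul, Matrix.mul_one]
  · rintro ⟨φ, rfl⟩
    have he : rotY φ *ᵥ ![0, 1, 0] = ![0, 1, 0] := by
      funext i
      fin_cases i <;> simp [rotY, mulVec, dotProduct, Fin.sum_univ_three]
    have hx'' : x' = Q'ᵀ *ᵥ ![0, 1, 0] := by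
      rw [← hQ'x', Matrix.mulVec_mulVec, hQ'orth, Matrix.one_mulVec]
    rw [← Matrix.mulVec_mulVec, ← Matrix.mulVec_mulVec, hQx, he, hx'']
end

section
/- Let R ∈ SO(3), t ∈ ℝ³, d₁ ∈ ℝ³ with d₁ ≠ 0, and set v₁ = d₁ and v₁' = R d₁ (the vanishing points of direction d₁ in the two calibrated cameras [I | 0] and [R | t]). Let l, l' ∈ ℝ³ and suppose there exist X₀, d ∈ ℝ³ with d ≠ 0 and ⟨d, d₁⟩ = 0 such that ⟨l, X₀ + s d⟩ = 0 and ⟨l', R (X₀ + s d) + t⟩ = 0 for all s ∈ ℝ (i.e., a 3D line with direction d orthogonal to d₁ projects to the image line l in camera 1 and to l' in camera 2). If l × v₁ ≠ 0 and l' × v₁' ≠ 0, then there exists a nonzero μ ∈ ℝ with l × v₁ = μ · Rᵀ (l' × v₁'); i.e., the direction of the 3D line recovered from each image as the cross product of the image line and the vanishing point must be consistent between the two views. -/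
open Matrix

lemma collinear_of_cross_eq_zero (d w : Fin 3 → ℝ) (hd : d ≠ 0)
    (h : d ⨯₃ w = 0) : ∃ α : ℝ, w = α • d := by
  have h0 := congrFun h 0
  have h1 := congrFun h 1
  have h2 := congrFun h 2
  simp [crossProduct] at h0 h1 h2
  have hcase : d 0 ≠ 0 ∨ d 1 ≠ 0 ∨ d 2 ≠ 0 := by
    by_contra hc
    push_neg at hc
    apply hd
    funext j
    fin_cases j
    · exact hc.1
    · exact hc.2.1
    · exact hc.2.2
  rcases hcase with hi | hi | hi
  · refine ⟨w 0 / d 0, funext fun j => ?_⟩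
    fin_cases j
    · show w 0 = w 0 / d 0 * d 0; field_simp
    · show w 1 = w 0 / d 0 * d 1; field_simp; linear_combination h2
    · show w 2 = w 0 / d 0 * d 2; field_simp; linear_combination -h1
  · refine ⟨w 1 / d 1, funext fun j => ?_⟩
    fin_cases j
    · show w 0 = w 1 / d 1 * d 0; field_simp; linear_combination -h2
    · show w 1 = w 1 / d 1 * d 1; field_simp
    · show w 2 = w 1 / d 1 * d 2; field_simp; linear_combination h0
  · refine ⟨w 2 / d 2, funext fun j => ?_⟩
    fin_cases j
    · show w 0 = w 2 / d 2 * d 0; field_simp; linear_combination h1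
    · show w 1 = w 2 / d 2 * d 1; field_simp; linear_combination -h0
    · show w 2 = w 2 / d 2 * d 2; field_simp

lemma triple_expand (u v w : Fin 3 → ℝ) :
    u ⨯₃ (v ⨯₃ w) = (u ⬝ᵥ w) • v - (u ⬝ᵥ v) • w := by
  funext i
  fin_cases i <;>
    simp [crossProduct, dotProduct, Fin.sum_univ_three] <;> ring

/-- **Direction consistency of a line orthogonal to a vanishing point.**
Let `R ∈ SO(3)`, `t ∈ ℝ³`, and `d₁ ≠ 0` a 3D direction with vanishing points
`v₁ = d₁` and `v₁' = R d₁` in the two cameras. Suppose a 3D line `X₀ + s d`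
with direction `d ≠ 0` orthogonal to `d₁` projects to the image line `l` in
camera 1 and `l'` in camera 2. If `l × v₁ ≠ 0` and `l' × v₁' ≠ 0`, then
`l × v₁ = μ • Rᵀ (l' × v₁')` for some nonzero `μ`. -/
theorem line_direction_consistency
    (R : Matrix (Fin 3) (Fin 3) ℝ) (hRorth : Rᵀ * R = 1) (hRdet : R.det = 1)
    (t d₁ : Fin 3 → ℝ) (hd₁ : d₁ ≠ 0)
    (v₁ v₁' : Fin 3 → ℝ) (hv₁ : v₁ = d₁) (hv₁' : v₁' = R *ᵥ d₁)
    (l l' : Fin 3 → ℝ)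
    (hline : ∃ X₀ d : Fin 3 → ℝ, d ≠ 0 ∧ d ⬝ᵥ d₁ = 0 ∧
      ∀ s : ℝ, l ⬝ᵥ (X₀ + s • d) = 0 ∧ l' ⬝ᵥ (R *ᵥ (X₀ + s • d) + t) = 0)
    (h₁ : l ⨯₃ v₁ ≠ 0) (h₂ : l' ⨯₃ v₁' ≠ 0) :
    ∃ μ : ℝ, μ ≠ 0 ∧ l ⨯₃ v₁ = μ • (Rᵀ *ᵥ (l' ⨯₃ v₁')) := by
  obtain ⟨X₀, d, hd, hdd₁, hproj⟩ := hline
  subst hv₁ hv₁'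
  -- l ⬝ᵥ d = 0
  have hld : l ⬝ᵥ d = 0 := by
    have e0 := (hproj 0).1
    have e1 := (hproj 1).1
    simp only [zero_smul, add_zero, one_smul, dotProduct_add] at e0 e1
    linarith
  -- l' ⬝ᵥ (R d) = 0
  have hl'Rd : l' ⬝ᵥ (R *ᵥ d) = 0 := by
    have f0 := (hproj 0).2
    have f1 := (hproj 1).2
    simp only [zero_smul, add_zero, one_smul, mulVec_add, dotProduct_add] at f0 f1
    linarith
  -- collinearity in view 1
  have hc1 : d ⨯₃ (l ⨯₃ v₁) = 0 := by
    rw [triple_expand, hdd₁, show d ⬝ᵥ l = 0 from by rwa [dotProduct_comm]]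
    simp
  obtain ⟨α, hα⟩ := collinear_of_cross_eq_zero d (l ⨯₃ v₁) hd hc1
  have hαne : α ≠ 0 := by
    rintro rfl; apply h₁; rw [hα, zero_smul]
  -- collinearity in view 2
  have hRd : R *ᵥ d ≠ 0 := by
    intro h
    apply hd
    have := congrArg (Rᵀ *ᵥ ·) h
    simpa [mulVec_mulVec, hRorth] using this
  have hRdRd₁ : (R *ᵥ d) ⬝ᵥ (R *ᵥ v₁) = 0 := by
    rw [dotProduct_mulVec, ← mulVec_transpose, mulVec_mulVec, hRorth]
    simpa using hdd₁
  have hc2 : (R *ᵥ d) ⨯₃ (l' ⨯₃ (R *ᵥ v₁)) = 0 := by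
    rw [triple_expand, hRdRd₁,
      show (R *ᵥ d) ⬝ᵥ l' = 0 from by rwa [dotProduct_comm]]
    simp
  obtain ⟨β, hβ⟩ := collinear_of_cross_eq_zero (R *ᵥ d) (l' ⨯₃ (R *ᵥ v₁)) hRd hc2
  have hβne : β ≠ 0 := by
    rintro rfl; apply h₂; rw [hβ, zero_smul]
  refine ⟨α / β, div_ne_zero hαne hβne, ?_⟩
  rw [hα, hβ]
  have : Rᵀ *ᵥ (β • (R *ᵥ d)) = β • d := by
    rw [mulVec_smul, mulVec_mulVec, hRorth, one_mulVec]
  rw [this, smul_smul, div_mul_cancel₀ _ hβne]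
end
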